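/- Strictness of the polynomial hierarchy: over Σ = {1,2}, define t_0 ∈ FEnd(Σ*) by t_0(1u) = 2u and t_0(2u) = 2·t_0(u) for all u ∈ Σ*, and for k ≥ 1 define t_k by t_k(1u) = c_k·t_{k−1}(u) and t_k(2u) = c_k·t_k(u), where c_k = 2 − (k mod 2). Then each t_k is a finite-state endomorphism and, for every k ≥ 0, t_k ∈ SP(k) ∖ SP(k−1): α_{t_k}(n)/n^{k+1} → 0 as n → ∞, but α_{t_k}(n)/n^{k} does not tend to 0. -/
import Mathlib


open Filter Topology

namespace AutHier

variable {A : Type*}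

/-- The section (state) `f|_u` of a transformation `f : Σ* → Σ*` at the word `u`. -/
def sec (f : List A → List A) (u : List A) : List A → List A :=
  fun v => (f (u ++ v)).drop u.length

/-- `f` is an endomorphism of `Σ*`: it preserves lengths and prefixes. -/
def IsEnd (f : List A → List A) : Prop :=
  (∀ u, (f u).length = u.length) ∧ ∀ u v, f u <+: f (u ++ v)

/-- `f` is a finite-state endomorphism of `Σ*` (an element of `FEnd(Σ*)`). -/
def IsFEnd (f : List A → List A) : Prop :=
  IsEnd f ∧ {g | ∃ u, g = sec f u}.Finite

/-- The activity `α_f(n)` of a transformation `f`: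
the number of words `v` of length `n` which are images of some word `u`
of length `n` whose section `f|_u` is nontrivial. -/
noncomputable def activity (f : List A → List A) (n : ℕ) : ℕ :=
  Set.ncard {v : List A | v.length = n ∧
    ∃ u : List A, u.length = n ∧ sec f u ≠ id ∧ f u = v}

/-- The class `SP(d)` of finite-state endomorphisms of
polynomial activity of degree at most `d`. -/
def SP (A : Type*) (d : ℤ) : Set (List A → List A) :=
  {t | IsFEnd t ∧
    Tendsto (fun n : ℕ => (activity t n : ℝ) / (n : ℝ) ^ (d + 1)) atTop (𝓝 0)}

/-- The class `SE(l)` of finite-state endomorphisms of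
exponential activity of growth rate at most `l`. -/
def SE (A : Type*) (l : ℝ) : Set (List A → List A) :=
  {t | IsFEnd t ∧
    limsup (fun n : ℕ => Real.log (activity t n) / (n : ℝ)) atTop ≤ l}

/-- The stateset `Q'(t)` of the pruned automaton: all sections of `t` except `id`. -/
def Qp (t : List A → List A) : Set (List A → List A) :=
  {g | ∃ u, g = sec t u} \ {id}

/-- One-letter transition of the determinized pruned output automaton of `t`. -/
def delta (t : List A → List A) (S : Set (List A → List A)) (y : A) :
    Set (List A → List A) :=
  {s' | s' ∈ Qp t ∧ ∃ s ∈ S, ∃ x : A, s [x] = [y] ∧ sec s [x] = s'}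

/-- Extended transition function `δ*` of the determinized pruned output automaton. -/
def deltaStar (t : List A → List A) (S : Set (List A → List A)) (v : List A) :
    Set (List A → List A) :=
  v.foldl (delta t) S

/-- There is a chain of `k` cycles in the determinized pruned output automaton of `t`. -/
def ChainOfCycles (t : List A → List A) (k : ℕ) : Prop :=
  ∃ (S : Fin k → Set (List A → List A)) (c : Fin k → List A),
    (∀ i, S i ≠ ∅) ∧ (∀ i, c i ≠ []) ∧
    (∀ h : 0 < k, ∃ v, deltaStar t {t} v = S ⟨0, h⟩) ∧
    (∀ i, deltaStar t (S i) (c i) = S i) ∧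
    (∀ (i : Fin k) (h : (i : ℕ) + 1 < k),
      (∃ v, deltaStar t (S i) v = S ⟨(i : ℕ) + 1, h⟩) ∧
      ¬ (∃ v, deltaStar t (S ⟨(i : ℕ) + 1, h⟩) v = S i))

/-- The edge relation of the orbit signalizer graph `Φ`: from the vertex `v = (s,t)`,
reading the letter `x`, with label `(x; m, ℓ)` where `m, ℓ` are the minimal integers
(`ℓ ≥ 1`) with `(s t^{m+ℓ})·x = (s t^m)·x`, the edge goes to
`v' = (r|_x, (t^ℓ)|_{r·x})` where `r = s t^m`. -/
def OSStep (v : (List A → List A) × (List A → List A)) (x : A) (m ℓ : ℕ)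
    (v' : (List A → List A) × (List A → List A)) : Prop :=
  1 ≤ ℓ ∧ v.2^[m + ℓ] (v.1 [x]) = v.2^[m] (v.1 [x]) ∧
  (∀ m' ℓ' : ℕ, 1 ≤ ℓ' → v.2^[m' + ℓ'] (v.1 [x]) = v.2^[m'] (v.1 [x]) → m ≤ m') ∧
  (∀ ℓ' : ℕ, 1 ≤ ℓ' → v.2^[m + ℓ'] (v.1 [x]) = v.2^[m] (v.1 [x]) → ℓ ≤ ℓ') ∧
  v' = (sec (v.2^[m] ∘ v.1) [x], sec (v.2^[ℓ]) ((v.2^[m] ∘ v.1) [x]))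

/-- A walk of length `n` in the orbit signalizer graph `Φ`. -/
structure OSPath (A : Type*) (n : ℕ) where
  vert : Fin (n + 1) → (List A → List A) × (List A → List A)
  lett : Fin n → A
  idx : Fin n → ℕ
  per : Fin n → ℕ
  step : ∀ k : Fin n, OSStep (vert k.castSucc) (lett k) (idx k) (per k) (vert k.succ)

/-- The inf-index-cost `i⁻(π)` of a walk with indices `idx` and periods `per`. -/
def iminusCost {n : ℕ} (idx per : Fin n → ℕ) : ℕ :=
  ∑ k : Fin n, if idx k = 0 then 0
    else (idx k - 1) * (∏ j ∈ Finset.univ.filter (· < k), per j) + 1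

/-- The sup-index-cost `i⁺(π)` of a walk with indices `idx` and periods `per`. -/
def iplusCost {n : ℕ} (idx per : Fin n → ℕ) : ℕ :=
  ∑ k : Fin n, (∏ j ∈ Finset.univ.filter (· < k), per j) * idx k

/-- The period-cost `p(π)` of a walk with periods `per`. -/
def pCost {n : ℕ} (per : Fin n → ℕ) : ℕ :=
  ∏ k : Fin n, per k

/-- The walk `w` starts at the vertex `(id, t)`, i.e. it is a walk in `Φ(t)` from its root. -/
def IsWalkFrom {n : ℕ} (t : List A → List A) (w : OSPath A n) : Prop :=
  w.vert 0 = (id, t)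

/-- The vertex `v` is accessible from `(id, t)` in `Φ`, i.e. `v` is a vertex of `Φ(t)`. -/
def OSReach (t : List A → List A) (v : (List A → List A) × (List A → List A)) : Prop :=
  ∃ n : ℕ, ∃ w : OSPath A n, IsWalkFrom t w ∧ w.vert (Fin.last n) = v

/-- The set of inf-index-costs of walks in `Φ(t)` from `(id, t)`. -/
def IminusCosts (t : List A → List A) : Set ℕ :=
  {c | ∃ n : ℕ, ∃ w : OSPath A n, IsWalkFrom t w ∧ c = iminusCost w.idx w.per}

/-- The set of sup-index-costs of walks in `Φ(t)` from `(id, t)`. -/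
def IplusCosts (t : List A → List A) : Set ℕ :=
  {c | ∃ n : ℕ, ∃ w : OSPath A n, IsWalkFrom t w ∧ c = iplusCost w.idx w.per}

/-- The set of period-costs of walks in `Φ(t)` from `(id, t)`. -/
def PCosts (t : List A → List A) : Set ℕ :=
  {c | ∃ n : ℕ, ∃ w : OSPath A n, IsWalkFrom t w ∧ c = pCost w.per}

/-- `w` is a simple cycle of `Φ(t)`: a closed walk of positive length, lying in `Φ(t)`,
with no repeated vertices. -/
def IsSimpleCycle {n : ℕ} (t : List A → List A) (w : OSPath A n) : Prop :=
  1 ≤ n ∧ OSReach t (w.vert 0) ∧ w.vert (Fin.last n) = w.vert 0 ∧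
  ∀ j k : Fin (n + 1), (j : ℕ) < n → (k : ℕ) < n → w.vert j = w.vert k → j = k

/-- The letter `c_k = 2 - (k mod 2)` over the alphabet `{1, 2}`, encoded as `Bool` with
`false ↦ 1` and `true ↦ 2`. -/
def ck (k : ℕ) : Bool := decide (k % 2 = 0)

/-- The transformations `t_k` over `Σ = {1,2}` (encoded as `Bool`, `false ↦ 1`,
`true ↦ 2`): `t_0(1u) = 2u`, `t_0(2u) = 2·t_0(u)`, and for `k ≥ 1`
`t_k(1u) = c_k·t_{k-1}(u)`, `t_k(2u) = c_k·t_k(u)`. -/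
def tk : ℕ → List Bool → List Bool
  | _, [] => []
  | 0, false :: u => true :: u
  | 0, true :: u => true :: tk 0 u
  | k + 1, false :: u => ck (k + 1) :: tk k u
  | k + 1, true :: u => ck (k + 1) :: tk (k + 1) u
termination_by k u => (k, u.length)

/-- Strictness of the polynomial hierarchy: each `t_k` is a finite-state endomorphism
and `t_k ∈ SP(k) ∖ SP(k-1)`: `α_{t_k}(n)/n^{k+1} → 0` but `α_{t_k}(n)/n^k ↛ 0`. -/
lemma tk_nil (k : ℕ) : tk k [] = [] := by cases k <;> simp [tk]
lemma tk_true (k : ℕ) (u : List Bool) : tk k (true :: u) = ck k :: tk k u := by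
  cases k <;> simp [tk, ck]
lemma tk_false_succ (k : ℕ) (u : List Bool) :
    tk (k+1) (false :: u) = ck (k+1) :: tk k u := by simp [tk]
lemma tk_false_zero (u : List Bool) : tk 0 (false :: u) = true :: u := by simp [tk]

lemma tk_length (k : ℕ) (u : List Bool) : (tk k u).length = u.length := by
  induction u generalizing k with
  | nil => simp [tk_nil]
  | cons x u ih =>
    cases x
    · cases k with
      | zero => simp [tk_false_zero]
      | succ m => simp [tk_false_succ, ih]
    · simp [tk_true, ih]

lemma tk_append (k : ℕ) (u v : List Bool) :
    tk k (u ++ v) = tk k u ++ (if u.count false ≤ k then tk (k - u.count false) v else v) := by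
  induction u generalizing k with
  | nil => simp [tk_nil]
  | cons x u ih =>
    cases x
    · cases k with
      | zero =>
        simp [tk_false_zero, List.count_cons]
      | succ m =>
        simp only [List.cons_append, tk_false_succ, ih m, List.count_cons, if_pos]
        have h1 : (u.count false + 1 ≤ m + 1) ↔ (u.count false ≤ m) := by omega
        have h2 : m + 1 - (u.count false + 1) = m - u.count false := by omega
        simp [h1, h2]
    · simp [tk_true, ih, List.count_cons]

lemma tk_head (k : ℕ) (x : Bool) (u : List Bool) :
    (tk k (x :: u)).head? = some (ck k) := by
  cases x
  · cases k with
    | zero => simp [tk_false_zero, ck]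
    | succ m => simp [tk_false_succ]
  · simp [tk_true]

lemma ck_succ (k : ℕ) : ck (k+1) = ! ck k := by
  simp only [ck]
  rcases Nat.mod_two_eq_zero_or_one k with h | h
  · have h2 : (k+1) % 2 = 1 := by omega
    simp [h, h2]
  · have h2 : (k+1) % 2 = 0 := by omega
    simp [h, h2]


lemma tk_inj (u : List Bool) : ∀ (u' : List Bool) (m : ℕ), u.count false ≤ m →
    u'.count false ≤ m → u.length = u'.length → u.getLast? = some true →
    u'.getLast? = some true → tk m u = tk m u' → u = u' := by
  induction u with
  | nil =>
    intro u' m _ _ hl _ _ _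
    exact (List.length_eq_zero_iff.mp hl.symm).symm
  | cons x us ih =>
    intro u' m hc hc' hl hg hg' he
    cases u' with
    | nil => simp at hl
    | cons x' us' =>
      cases us with
      | nil =>
        have hus' : us' = [] := by simpa using hl.symm
        subst hus'
        simp [List.getLast?] at hg hg'
        simp [hg, hg']
      | cons y ys =>
        cases us' with
        | nil => simp at hl
        | cons y' ys' =>
          rw [List.getLast?_cons_cons] at hg hg'
          have hl2 : (y :: ys).length = (y' :: ys').length := by simpa using hl
          cases x <;> cases x'
          · -- false false
            cases m with
            | zero => simp [List.count_cons] at hc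
            | succ n =>
              rw [tk_false_succ, tk_false_succ] at he
              have hta : tk n (y :: ys) = tk n (y' :: ys') := by
                simpa using he
              have hcn : (y :: ys).count false ≤ n := by
                simp [List.count_cons] at hc ⊢; omega
              have hcn' : (y' :: ys').count false ≤ n := by
                simp [List.count_cons] at hc' ⊢; omega
              rw [ih (y' :: ys') n hcn hcn' hl2 hg hg' hta]
          · -- false true
            cases m with
            | zero => simp [List.count_cons] at hc
            | succ n =>
              rw [tk_false_succ, tk_true] at he
              have hta : tk n (y :: ys) = tk (n+1) (y' :: ys') := by simpa using he
              have h1 := tk_head n y ys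
              have h2 := tk_head (n+1) y' ys'
              rw [hta, h2, ck_succ] at h1
              simp at h1
          · -- true false
            cases m with
            | zero => simp [List.count_cons] at hc'
            | succ n =>
              rw [tk_true, tk_false_succ] at he
              have hta : tk (n+1) (y :: ys) = tk n (y' :: ys') := by simpa using he
              have h1 := tk_head (n+1) y ys
              have h2 := tk_head n y' ys'
              rw [hta, h2, ck_succ] at h1
              simp at h1
          · rw [tk_true, tk_true] at he
            have hta : tk m (y :: ys) = tk m (y' :: ys') := by simpa using he
            have hcn : (y :: ys).count false ≤ m := by simpa [List.count_cons] using hc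
            have hcn' : (y' :: ys').count false ≤ m := by simpa [List.count_cons] using hc'
            rw [ih (y' :: ys') m hcn hcn' hl2 hg hg' hta]


lemma getLast?_cons_ne_nil {α : Type*} (a : α) {l : List α} (h : l ≠ []) :
    (a :: l).getLast? = l.getLast? := by
  have := List.getLast?_append_of_ne_nil [a] (l₂ := l) h
  simpa using this

lemma tk_rep_getLast (m : ℕ) :
    (tk m (List.replicate (m+1) false)).getLast? = some true := by
  induction m with
  | zero => simp [List.replicate, tk_false_zero]
  | succ n ih =>
    rw [List.replicate_succ]
    have hne : tk n (List.replicate (n+1) false) ≠ [] := by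
      intro h
      have := tk_length n (List.replicate (n+1) false)
      rw [h] at this
      simp at this
    rw [tk_false_succ, getLast?_cons_ne_nil _ hne, ih]

lemma tk_ne_id (m : ℕ) : tk m ≠ id := by
  intro h
  have h1 := tk_rep_getLast m
  rw [h, id] at h1
  rw [List.getLast?_replicate] at h1
  simp at h1

lemma sec_tk (k : ℕ) (u : List Bool) :
    sec (tk k) u = if u.count false ≤ k then tk (k - u.count false) else id := by
  funext v
  have h : (tk k u).length = u.length := tk_length k u
  simp only [sec, tk_append]
  rw [← h, List.drop_left]
  split <;> rfl

lemma sec_tk_ne_id_iff (k : ℕ) (u : List Bool) :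
    sec (tk k) u ≠ id ↔ u.count false ≤ k := by
  rw [sec_tk]
  split
  · exact iff_of_true (tk_ne_id _) ‹_›
  · exact iff_of_false (by simp) ‹_›


lemma count_false_ofFn {n : ℕ} (f : Fin n → Bool) :
    (List.ofFn f).count false = (Finset.univ.filter fun i => f i = false).card := by
  induction n with
  | zero => simp
  | succ m ih =>
    rw [List.ofFn_succ, List.count_cons, ih, Finset.card_filter, Finset.card_filter,
      Fin.sum_univ_succ]
    cases h : f 0 <;> simp [h, add_comm]

lemma count_false_eq_card (u : List Bool) :
    u.count false = (Finset.univ.filter fun i : Fin u.length => u.get i = false).card := by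
  conv_lhs => rw [← List.ofFn_get u]
  rw [count_false_ofFn]

lemma U_ncard_le (k n : ℕ) (hn : 1 ≤ n) :
    {u : List Bool | u.length = n ∧ u.count false ≤ k}.ncard ≤ (k+1) * n^k := by
  classical
  set t : Set (Finset (Fin n)) :=
    ↑((Finset.univ : Finset (Finset (Fin n))).filter (fun s => s.card ≤ k)) with ht
  have hle : {u : List Bool | u.length = n ∧ u.count false ≤ k}.ncard ≤ t.ncard := by
    apply Set.ncard_le_ncard_of_injOn
      (fun u => Finset.univ.filter fun i : Fin n => u.getD i true = false)
    · rintro u ⟨hu, hc⟩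
      subst hu
      simp only [ht, Finset.coe_filter, Set.mem_setOf_eq, Finset.mem_univ, true_and]
      have : (Finset.univ.filter fun i : Fin u.length => u.getD i true = false)
          = (Finset.univ.filter fun i : Fin u.length => u.get i = false) := by
        apply Finset.filter_congr
        intro i _
        rw [List.getD_eq_getElem u true i.isLt]
        rfl
      rw [this, ← count_false_eq_card]
      exact hc
    · rintro u ⟨hu, -⟩ u' ⟨hu', -⟩ hmap
      apply List.ext_get (by omega)
      intro i hi hi'
      have := Finset.ext_iff.mp hmap ⟨i, by omega⟩
      simp only [Finset.mem_filter, Finset.mem_univ, true_and] at this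
      have h1 : u.getD i true = u.get ⟨i, hi⟩ := by
        rw [List.getD_eq_getElem u true]; rfl
      have h2 : u'.getD i true = u'.get ⟨i, hi'⟩ := by
        rw [List.getD_eq_getElem u' true]; rfl
      rw [h1, h2] at this
      simp only [List.get_eq_getElem] at this ⊢
      cases hv : u[i] <;> cases hv' : u'[i]
      · rfl
      · rw [hv, hv'] at this; exact absurd this (by simp)
      · rw [hv, hv'] at this; exact absurd this (by simp)
      · rfl
  refine hle.trans ?_
  rw [ht, Set.ncard_coe_finset]
  have hsub : (Finset.univ : Finset (Finset (Fin n))).filter (fun s => s.card ≤ k)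
      ⊆ (Finset.range (k+1)).biUnion (fun j => Finset.powersetCard j Finset.univ) := by
    intro s hs
    simp only [Finset.mem_filter, Finset.mem_univ, true_and] at hs
    simp only [Finset.mem_biUnion, Finset.mem_range]
    exact ⟨s.card, by omega, by simp [Finset.mem_powersetCard]⟩
  refine (Finset.card_le_card hsub).trans ?_
  refine Finset.card_biUnion_le.trans ?_
  calc ∑ j ∈ Finset.range (k+1), (Finset.powersetCard j (Finset.univ : Finset (Fin n))).card
      ≤ ∑ _j ∈ Finset.range (k+1), n^k := by
        refine Finset.sum_le_sum (fun j hj => ?_)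
        rw [Finset.card_powersetCard, Finset.card_univ, Fintype.card_fin]
        refine (Nat.choose_le_pow n j).trans (Nat.pow_le_pow_right hn ?_)
        simp only [Finset.mem_range] at hj
        omega
    _ = (k+1) * n^k := by simp


/-- The activity set. -/
def actSet (k n : ℕ) : Set (List Bool) :=
  {v : List Bool | v.length = n ∧
    ∃ u : List Bool, u.length = n ∧ sec (tk k) u ≠ id ∧ tk k u = v}

lemma actSet_eq (k n : ℕ) :
    actSet k n = tk k '' {u | u.length = n ∧ u.count false ≤ k} := by
  ext v
  constructor
  · rintro ⟨hv, u, hu, hsec, rfl⟩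
    exact ⟨u, ⟨hu, (sec_tk_ne_id_iff k u).mp hsec⟩, rfl⟩
  · rintro ⟨u, ⟨hu, hc⟩, rfl⟩
    exact ⟨by rw [tk_length, hu], u, hu, (sec_tk_ne_id_iff k u).mpr hc, rfl⟩

lemma actSet_finite (k n : ℕ) : (actSet k n).Finite :=
  (List.finite_length_eq Bool n).subset (fun _ hv => hv.1)

/-- encoding of a subset as a word ending in `true`. -/
def enc (m : ℕ) (s : Finset (Fin m)) : List Bool :=
  (List.ofFn fun i => !(decide (i ∈ s))) ++ [true]

lemma enc_length (m : ℕ) (s : Finset (Fin m)) : (enc m s).length = m + 1 := by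
  simp [enc]

lemma enc_count (m : ℕ) (s : Finset (Fin m)) : (enc m s).count false = s.card := by
  rw [enc, List.count_append, count_false_ofFn]
  have : (Finset.univ.filter fun i : Fin m => (!(decide (i ∈ s))) = false) = s := by
    ext i; simp
  rw [this]
  simp

lemma enc_getLast (m : ℕ) (s : Finset (Fin m)) : (enc m s).getLast? = some true := by
  rw [enc, List.getLast?_append_of_ne_nil _ (by simp)]
  rfl

lemma enc_inj (m : ℕ) : Function.Injective (enc m) := by
  intro s s' h
  rw [enc, enc] at h
  have h2 := List.ofFn_injective (List.append_left_injective _ h)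
  ext i
  have := congrFun h2 i
  simpa using this

lemma act_lower (k m : ℕ) : m.choose k ≤ (actSet k (m+1)).ncard := by
  classical
  set Sfin : Finset (List Bool) :=
    (Finset.powersetCard k (Finset.univ : Finset (Fin m))).image (enc m) with hS
  have hcard : Sfin.card = m.choose k := by
    rw [hS, Finset.card_image_of_injective _ (enc_inj m), Finset.card_powersetCard,
      Finset.card_univ, Fintype.card_fin]
  have hmem : ∀ u ∈ (Sfin : Set (List Bool)),
      u.length = m + 1 ∧ u.count false ≤ k ∧ u.getLast? = some true := by
    intro u hu
    simp only [hS, Finset.coe_image, Set.mem_image, Finset.mem_coe,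
      Finset.mem_powersetCard] at hu
    obtain ⟨s, ⟨-, hsc⟩, rfl⟩ := hu
    exact ⟨enc_length m s, by rw [enc_count, hsc], enc_getLast m s⟩
  have hsub : tk k '' ↑Sfin ⊆ actSet k (m+1) := by
    rintro v ⟨u, hu, rfl⟩
    obtain ⟨h1, h2, -⟩ := hmem u hu
    exact ⟨by rw [tk_length, h1], u, h1, (sec_tk_ne_id_iff k u).mpr h2, rfl⟩
  have hinj : Set.InjOn (tk k) ↑Sfin := by
    intro u hu u' hu' he
    obtain ⟨h1, h2, h3⟩ := hmem u hu
    obtain ⟨h1', h2', h3'⟩ := hmem u' hu'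
    exact tk_inj u u' k h2 h2' (by rw [h1, h1']) h3 h3' he
  calc m.choose k = (tk k '' ↑Sfin).ncard := by
        rw [Set.ncard_image_of_injOn hinj, Set.ncard_coe_finset, hcard]
    _ ≤ (actSet k (m+1)).ncard := Set.ncard_le_ncard hsub (actSet_finite k (m+1))


section
variable (k : ℕ) (a : ℕ → ℕ)
  (upper : ∀ n : ℕ, 1 ≤ n → a n ≤ (k+1) * n^k)
  (lower : ∀ m : ℕ, m.choose k ≤ a (m+1))

include upper in
theorem upper_lim : Tendsto (fun n : ℕ => (a n : ℝ) / (n : ℝ) ^ (k + 1)) atTop (𝓝 0) := by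
  have hg : Tendsto (fun n : ℕ => ((k+1 : ℕ) : ℝ) / (n : ℝ)) atTop (𝓝 0) :=
    tendsto_const_div_atTop_nhds_zero_nat _
  refine squeeze_zero' ?_ ?_ hg
  · filter_upwards [eventually_ge_atTop 1] with n hn
    positivity
  · filter_upwards [eventually_ge_atTop 1] with n hn
    have hnp : (0:ℝ) < (n:ℝ) := by exact_mod_cast hn
    have h1 : (a n : ℝ) ≤ ((k+1 : ℕ) : ℝ) * (n:ℝ)^k := by
      exact_mod_cast upper n hn
    rw [pow_succ, div_le_div_iff₀ (by positivity) hnp]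
    calc (a n : ℝ) * (n:ℝ) ≤ (((k+1:ℕ):ℝ) * (n:ℝ)^k) * (n:ℝ) := by
          apply mul_le_mul_of_nonneg_right h1 hnp.le
      _ = ((k+1:ℕ):ℝ) * ((n:ℝ)^k * (n:ℝ)) := by ring
  done

include lower in
theorem lower_lim : ¬ Tendsto (fun n : ℕ => (a n : ℝ) / (n : ℝ) ^ k) atTop (𝓝 0) := by
  intro h
  set ε : ℝ := 1 / (2^k * (k.factorial : ℝ)) with hε
  have hεpos : 0 < ε := by positivity
  have hev := h.eventually_lt_const hεpos
  have hbig : ∀ᶠ n : ℕ in atTop, ε ≤ (a n : ℝ) / (n : ℝ) ^ k := by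
    filter_upwards [eventually_ge_atTop (2*k+1)] with n hn
    have hn1 : 1 ≤ n := by omega
    have hnp : (0:ℝ) < (n:ℝ) := by exact_mod_cast hn1
    have hch : ((n/2 : ℝ))^k / (k.factorial : ℝ) ≤ ((n-1).choose k : ℝ) := by
      have h2 := Nat.pow_le_choose (α := ℝ) k (n-1)
      have h3 : n - 1 + 1 - k = n - k := by omega
      rw [h3] at h2
      refine le_trans ?_ h2
      have h4 : (n:ℝ)/2 ≤ ((n - k : ℕ) : ℝ) := by
        have : ((n - k : ℕ) : ℝ) = (n:ℝ) - (k:ℝ) := by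
          push_cast [Nat.cast_sub (by omega : k ≤ n)]; ring
        rw [this]
        have : (2*k : ℝ) ≤ (n:ℝ) := by exact_mod_cast (by omega : 2*k ≤ n)
        linarith
      gcongr
    have hla : ((n-1).choose k : ℝ) ≤ (a n : ℝ) := by
      have := lower (n-1)
      have h5 : n - 1 + 1 = n := by omega
      rw [h5] at this
      exact_mod_cast this
    have : ((n/2 : ℝ))^k / (k.factorial : ℝ) ≤ (a n : ℝ) := hch.trans hla
    rw [hε, div_le_div_iff₀ (by positivity) (by positivity)]
    calc 1 * (n:ℝ)^k = ((n/2)^k / (k.factorial : ℝ)) * (2^k * (k.factorial : ℝ)) := by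
          rw [div_pow]
          field_simp
      _ ≤ (a n : ℝ) * (2^k * (k.factorial : ℝ)) := by
          apply mul_le_mul_of_nonneg_right this (by positivity)
      _ = (a n : ℝ) * (2^k * (k.factorial : ℝ)) := rfl
  obtain ⟨n, h1, h2⟩ := (hbig.and hev).exists
  linarith
end

theorem tk_strict_hierarchy (k : ℕ) :
    IsFEnd (tk k) ∧
    Tendsto (fun n : ℕ => (activity (tk k) n : ℝ) / (n : ℝ) ^ (k + 1)) atTop (𝓝 0) ∧
    ¬ Tendsto (fun n : ℕ => (activity (tk k) n : ℝ) / (n : ℝ) ^ k) atTop (𝓝 0) := by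
  have hact : ∀ n, activity (tk k) n = (actSet k n).ncard := fun n => rfl
  refine ⟨⟨⟨tk_length k, fun u v => ⟨_, (tk_append k u v).symm⟩⟩, ?_⟩, ?_, ?_⟩
  · refine Set.Finite.subset (((Set.finite_Iic k).image tk).union
      (Set.finite_singleton id)) ?_
    rintro g ⟨u, rfl⟩
    rw [sec_tk]
    split
    · exact Or.inl ⟨k - u.count false, by simp, rfl⟩
    · exact Or.inr rfl
  · refine upper_lim k _ (fun n hn => ?_)
    rw [hact, actSet_eq]
    exact le_trans (Set.ncard_image_le ((List.finite_length_eq Bool n).subset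
      fun u hu => hu.1)) (U_ncard_le k n hn)
  · exact lower_lim k _ (fun m => by rw [hact]; exact act_lower k m)


end AutHier
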